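/- Any multilinear real polynomial p in N variables that approximates the parity function with positive bias ε > 0 (i.e., p(x) ≥ 1/2 + ε when x has odd Hamming weight and p(x) ≤ 1/2 - ε when x has even Hamming weight, for all x ∈ {0,1}^N) has degree exactly N. -/
import Mathlib

lemma sum_prod_bool_aux {N : ℕ} (g : Fin N → Bool → ℝ) :
    ∑ x : Fin N → Bool, ∏ i, g i (x i) = ∏ i, (g i true + g i false) := by
  have h := Finset.prod_univ_sum (fun _ : Fin N => (Finset.univ : Finset Bool)) g
  rw [Fintype.piFinset_univ] at h
  rw [← h]
  exact Finset.prod_congr rfl (fun i _ => by rw [Fintype.sum_bool])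

/-- Any multilinear real polynomial approximating parity with positive bias `ε`
has degree exactly `N`. -/
theorem stmt_13 (N : ℕ) (ε : ℝ) (hε : 0 < ε)
    (p : MvPolynomial (Fin N) ℝ)
    (hml : ∀ i, p.degreeOf i ≤ 1)
    (hodd : ∀ x : Fin N → Bool, Odd (Finset.univ.filter (fun i => x i)).card →
      1 / 2 + ε ≤ MvPolynomial.eval (fun i => if x i then (1 : ℝ) else 0) p)
    (heven : ∀ x : Fin N → Bool, Even (Finset.univ.filter (fun i => x i)).card →
      MvPolynomial.eval (fun i => if x i then (1 : ℝ) else 0) p ≤ 1 / 2 - ε) :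
    p.totalDegree = N := by
  have hub : p.totalDegree ≤ N := by
    apply Finset.sup_le
    intro d hd
    calc d.sum (fun _ e => e) = ∑ i ∈ d.support, d i := rfl
      _ ≤ ∑ i : Fin N, d i := Finset.sum_le_sum_of_subset (Finset.subset_univ _)
      _ ≤ ∑ _i : Fin N, 1 := Finset.sum_le_sum (fun i _ =>
          le_trans (MvPolynomial.monomial_le_degreeOf i hd) (hml i))
      _ = N := by simp
  by_contra hne
  have hlt : p.totalDegree < N := lt_of_le_of_ne hub hne
  have hN : N ≠ 0 := by omega
  have hsign : ∀ x : Fin N → Bool,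
      ((-1 : ℝ)) ^ (Finset.univ.filter (fun i => x i)).card
        = ∏ i : Fin N, (if x i then (-1 : ℝ) else 1) := by
    intro x
    rw [Finset.prod_ite, Finset.prod_const, Finset.prod_const, one_pow, mul_one]
  set S : ℝ := ∑ x : Fin N → Bool,
      ((-1 : ℝ)) ^ (Finset.univ.filter (fun i => x i)).card
        * MvPolynomial.eval (fun i => if x i then (1 : ℝ) else 0) p with hS
  -- S = 0 since every monomial of p misses some variable
  have hS0 : S = 0 := by
    have h1 : S = ∑ d ∈ p.support, p.coeff d *
        ∑ x : Fin N → Bool, ∏ i : Fin N,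
          ((if x i then (-1 : ℝ) else 1) * (if x i then (1 : ℝ) else 0) ^ d i) := by
      rw [hS]
      calc (∑ x : Fin N → Bool,
          ((-1 : ℝ)) ^ (Finset.univ.filter (fun i => x i)).card
            * MvPolynomial.eval (fun i => if x i then (1 : ℝ) else 0) p)
          = ∑ x : Fin N → Bool, ∑ d ∈ p.support, p.coeff d *
              ∏ i : Fin N,
                ((if x i then (-1 : ℝ) else 1) * (if x i then (1 : ℝ) else 0) ^ d i) := by
            refine Finset.sum_congr rfl (fun x _ => ?_)
            rw [MvPolynomial.eval_eq', Finset.mul_sum]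
            refine Finset.sum_congr rfl (fun d _ => ?_)
            rw [hsign, Finset.prod_mul_distrib]
            ring
        _ = _ := by
            rw [Finset.sum_comm]
            exact Finset.sum_congr rfl (fun d _ => (Finset.mul_sum _ _ _).symm)
    rw [h1]
    apply Finset.sum_eq_zero
    intro d hd
    -- find a variable with exponent 0
    have hex : ∃ i, d i = 0 := by
      by_contra hc
      push_neg at hc
      have hsupp : d.support = Finset.univ := by
        ext i; simp [Finsupp.mem_support_iff, hc i]
      have : (N : ℕ) ≤ d.sum fun _ e => e := by
        have : d.sum (fun _ e => e) = ∑ i ∈ d.support, d i := rfl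
        rw [this, hsupp]
        calc (N : ℕ) = ∑ _i : Fin N, 1 := by simp
          _ ≤ ∑ i : Fin N, d i := Finset.sum_le_sum (fun i _ =>
              Nat.one_le_iff_ne_zero.mpr (hc i))
      exact absurd (le_trans this (MvPolynomial.le_totalDegree hd)) (by omega)
    obtain ⟨j, hj⟩ := hex
    rw [sum_prod_bool_aux (fun i b => (if b then (-1 : ℝ) else 1) * (if b then (1 : ℝ) else 0) ^ d i)]
    rw [Finset.prod_eq_zero (Finset.mem_univ j)]
    · ring
    · simp [hj]
  -- S < 0 from the bias
  have hterm : ∀ x : Fin N → Bool,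
      ((-1 : ℝ)) ^ (Finset.univ.filter (fun i => x i)).card
        * (MvPolynomial.eval (fun i => if x i then (1 : ℝ) else 0) p - 1/2) ≤ -ε := by
    intro x
    rcases Nat.even_or_odd (Finset.univ.filter (fun i => x i)).card with he | ho
    · rw [he.neg_one_pow, one_mul]
      linarith [heven x he]
    · rw [ho.neg_one_pow, neg_one_mul]
      linarith [hodd x ho]
  have hsignsum : ∑ x : Fin N → Bool,
      ((-1 : ℝ)) ^ (Finset.univ.filter (fun i => x i)).card = 0 := by
    rw [Finset.sum_congr rfl (fun x _ => hsign x)]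
    rw [sum_prod_bool_aux (fun _ b => if b then (-1 : ℝ) else 1)]
    simp [hN]
  have hSle : S ≤ -(2 ^ N * ε) := by
    have hsplit : S = (∑ x : Fin N → Bool,
        ((-1 : ℝ)) ^ (Finset.univ.filter (fun i => x i)).card
          * (MvPolynomial.eval (fun i => if x i then (1 : ℝ) else 0) p - 1/2))
        + (1/2) * ∑ x : Fin N → Bool,
        ((-1 : ℝ)) ^ (Finset.univ.filter (fun i => x i)).card := by
      rw [hS, Finset.mul_sum, ← Finset.sum_add_distrib]
      refine Finset.sum_congr rfl (fun x _ => ?_)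
      ring
    rw [hsplit, hsignsum, mul_zero, add_zero]
    calc (∑ x : Fin N → Bool,
        ((-1 : ℝ)) ^ (Finset.univ.filter (fun i => x i)).card
          * (MvPolynomial.eval (fun i => if x i then (1 : ℝ) else 0) p - 1/2))
        ≤ ∑ _x : Fin N → Bool, (-ε) := Finset.sum_le_sum (fun x _ => hterm x)
      _ = -(2 ^ N * ε) := by
          rw [Finset.sum_const]
          simp [Fintype.card_fun]
          try ring
  have : (0:ℝ) < 2 ^ N * ε := by positivity
  rw [hS0] at hSle
  linarith
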